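/- Let (E, ℰ, μ) be a probability space, let L : E → ℝ → ℝ, and let c ∈ (0,1). Define G : ℝ → ℝ by G(u) = ∫ L(x, u) dμ(x). Assume G is differentiable at c with derivative D, and assume G(c)/c > D. Then there exists p ∈ (c, 1) such that p · G(c/p) < G(c). -/

import Mathlib

open MeasureTheory

/-- First-order condition: if the expected length `G(u) = ∫ L(x,u) dμ` is differentiable
at the target coverage level `c ∈ (0,1)` with derivative `D` and `G(c)/c > D`, then
there exists `p ∈ (c,1)` with `p · G(c/p) < G(c)`. -/
theorem pt_first_order_condition {E : Type*} [MeasurableSpace E]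
    (μ : Measure E) [IsProbabilityMeasure μ]
    (L : E → ℝ → ℝ) (c : ℝ) (hc : c ∈ Set.Ioo (0 : ℝ) 1)
    (G : ℝ → ℝ) (hG : ∀ u, G u = ∫ x, L x u ∂μ)
    (D : ℝ) (hderiv : HasDerivAt G D c)
    (hcond : G c / c > D) :
    ∃ p ∈ Set.Ioo c 1, p * G (c / p) < G c := by
  set f : ℝ → ℝ := fun p => p * G (c / p) with hf
  have h1 : HasDerivAt (fun p : ℝ => c / p) (-c) (1 : ℝ) := by
    have := ((hasDerivAt_inv (one_ne_zero : (1:ℝ) ≠ 0)).const_mul c)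
    simpa [div_eq_mul_inv] using this
  have hGc : HasDerivAt G D (c / 1) := by simpa using hderiv
  have h2 : HasDerivAt (fun p : ℝ => G (c / p)) (D * -c) 1 :=
    HasDerivAt.comp 1 hGc h1
  have h3 : HasDerivAt f (G c - c * D) 1 := by
    have := (hasDerivAt_id (1 : ℝ)).mul h2
    simpa [hf, Pi.mul_def, mul_comm, sub_eq_add_neg, mul_assoc] using this
  have hpos : 0 < G c - c * D := by
    have := (lt_div_iff₀ hc.1).mp hcond
    linarith
  have hslope : Filter.Tendsto (slope f 1) (nhdsWithin 1 {(1:ℝ)}ᶜ) (nhds (G c - c * D)) :=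
    hasDerivAt_iff_tendsto_slope.mp h3
  have hslope' : ∀ᶠ p in nhdsWithin (1:ℝ) (Set.Iio 1), 0 < slope f 1 p := by
    have : ∀ᶠ p in nhdsWithin (1:ℝ) {(1:ℝ)}ᶜ, 0 < slope f 1 p :=
      hslope.eventually (eventually_gt_nhds hpos)
    exact this.filter_mono (nhdsWithin_mono _ (fun x hx => ne_of_lt hx))
  have hmem : ∀ᶠ p in nhdsWithin (1:ℝ) (Set.Iio 1), p ∈ Set.Ioo c 1 :=
    Ioo_mem_nhdsLT_of_mem ⟨hc.2, le_refl 1⟩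
  have : ∀ᶠ p in nhdsWithin (1:ℝ) (Set.Iio 1),
      p ∈ Set.Ioo c 1 ∧ 0 < slope f 1 p := hmem.and hslope'
  obtain ⟨p, hpI, hps⟩ := this.exists
  refine ⟨p, hpI, ?_⟩
  have hp1 : p - 1 < 0 := by linarith [hpI.2]
  have hsl : slope f 1 p = (f p - f 1) / (p - 1) := by
    rw [slope_def_field]
  rw [hsl] at hps
  have : f p - f 1 < 0 := by
    by_contra h
    push_neg at h
    have := div_nonpos_of_nonneg_of_nonpos h (le_of_lt hp1)
    linarith
  have hf1 : f 1 = G c := by simp [hf]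
  have : f p < G c := by rw [← hf1]; linarith
  simpa [hf] using this
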